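/- arXiv:1011.5391 — 2 statements merged into one kernel-verified Lean document; each statement's English description precedes it below -/
import Mathlib

section
/- For any k-tuple (ℓ_1, ..., ℓ_k) of positive integers, the α-Lüroth cylinder set C_α(ℓ_1,...,ℓ_k) is a closed interval with endpoints [ℓ_1,...,ℓ_k]_α and [ℓ_1,...,ℓ_k + 1]_α, and its Lebesgue measure equals the product a_{ℓ_1}·a_{ℓ_2}⋯a_{ℓ_k}. -/
open Filter Set MeasureTheory Topology

noncomputable section

/-- Data of a countable interval partition `α` of `(0,1]`: `a n` is the Lebesgue
measure of the `n`-th atom `A_n` (for `n ≥ 1`), the atoms are ordered from right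
to left and their measures sum to `1`. -/
structure LurothData where
  a : ℕ → ℝ
  pos : ∀ n, 1 ≤ n → 0 < a n
  summ : Summable fun n => a (n + 1)
  total : (∑' n : ℕ, a (n + 1)) = 1

namespace LurothData

variable (P : LurothData)

/-- the `n`-th tail `t_n = Σ_{k ≥ n} a_k`. -/
def t (n : ℕ) : ℝ := ∑' k : ℕ, P.a (n + k)

/-- the index `n` of the atom `A_n = (t_{n+1}, t_n]` containing `x` (and `0` if none). -/
def digit (x : ℝ) : ℕ := sInf {n | 1 ≤ n ∧ x ∈ Set.Ioc (P.t (n + 1)) (P.t n)}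

/-- the α-Lüroth map `L_α`. -/
def map (x : ℝ) : ℝ :=
  if P.digit x = 0 then 0 else (P.t (P.digit x) - x) / P.a (P.digit x)

/-- `dseq P n x` is the `(n+1)`-st α-Lüroth digit `ℓ_{n+1}(x)`. -/
def dseq (n : ℕ) (x : ℝ) : ℕ := P.digit (P.map^[n] x)

/-- the finite α-Lüroth expansion `[ℓ_1, …, ℓ_k]_α`. -/
def val : List ℕ → ℝ
  | [] => 0
  | l :: ls => P.t l - P.a l * val ls

/-- the α-Lüroth cylinder set `C_α(ℓ_1, …, ℓ_k)` (as the set of points whose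
first `k` digits are prescribed). -/
def cyl (ls : List ℕ) : Set ℝ :=
  {x | x ∈ Set.Ioc (0 : ℝ) 1 ∧ ∀ i : Fin ls.length, P.dseq i x = ls.get i}

end LurothData

/-- A (discretely sampled) slowly varying function. -/
def SlowlyVaryingN (ψ : ℕ → ℝ) : Prop :=
  ∀ c : ℕ, 0 < c → Tendsto (fun n => ψ (c * n) / ψ n) atTop (𝓝 1)

/-- `α` is expansive of exponent `θ`: `t_n = ψ(n) n^{-θ}` with `ψ` slowly varying. -/
def LurothData.Expansive (P : LurothData) (θ : ℝ) : Prop :=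
  ∃ ψ : ℕ → ℝ, (∀ n, 0 < ψ n) ∧ SlowlyVaryingN ψ ∧
    ∀ n, 1 ≤ n → P.t n = ψ n * (n : ℝ) ^ (-θ)

/-- `α` is eventually decreasing. -/
def LurothData.EventuallyDecreasing (P : LurothData) : Prop :=
  ∃ N : ℕ, ∀ n, N ≤ n → P.a (n + 1) < P.a n

/-- the α-Good set `G_N^{(α)}`. -/
def LurothData.goodSet (P : LurothData) (N : ℕ) : Set ℝ :=
  {x | x ∈ Set.Ioc (0 : ℝ) 1 ∧ ∀ n : ℕ, N < P.dseq n x}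

/-- `G_∞^{(α)}`: points whose digits tend to infinity. -/
def LurothData.Ginf (P : LurothData) : Set ℝ :=
  {x | x ∈ Set.Ioc (0 : ℝ) 1 ∧ Tendsto (fun n => P.dseq n x) atTop atTop}

/-- `F_∞^{(α)}`: points whose digits are non-decreasing and tend to infinity. -/
def LurothData.Finf (P : LurothData) : Set ℝ :=
  {x | x ∈ P.Ginf ∧ ∀ n : ℕ, P.dseq n x ≤ P.dseq (n + 1) x}

end
noncomputable section Aux
namespace LurothData
variable (P : LurothData)

lemma summ_shift (n : ℕ) (hn : 1 ≤ n) : Summable fun k => P.a (n + k) := by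
  obtain ⟨m, rfl⟩ := Nat.exists_eq_add_of_le hn
  have := (summable_nat_add_iff m).2 P.summ
  exact this.congr (fun k => by ring_nf)

lemma t_succ (n : ℕ) (hn : 1 ≤ n) : P.t n = P.a n + P.t (n + 1) := by
  have hs := P.summ_shift n hn
  have := Summable.tsum_eq_zero_add hs
  simp only [t, add_zero] at this ⊢
  rw [this]
  congr 1
  exact tsum_congr fun k => by ring_nf

lemma t_nonneg (n : ℕ) (hn : 1 ≤ n) : 0 ≤ P.t n :=
  tsum_nonneg fun k => (P.pos (n + k) (le_add_right hn)).le

lemma t_pos (n : ℕ) (hn : 1 ≤ n) : 0 < P.t n := by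
  rw [P.t_succ n hn]
  exact add_pos_of_pos_of_nonneg (P.pos n hn) (P.t_nonneg (n+1) (by omega))

lemma t_succ_lt (n : ℕ) (hn : 1 ≤ n) : P.t (n + 1) < P.t n := by
  rw [P.t_succ n hn]; linarith [P.pos n hn]

lemma t_mono {n m : ℕ} (hn : 1 ≤ n) (hnm : n ≤ m) : P.t m ≤ P.t n := by
  induction m with
  | zero => omega
  | succ k ih =>
    rcases Nat.lt_or_ge n (k+1) with h | h
    · have h1 : n ≤ k := by omega
      exact le_trans (P.t_succ_lt k (by omega)).le (ih h1)
    · have : n = k + 1 := by omega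
      subst this; rfl

lemma t_one : P.t 1 = 1 := by
  rw [t, ← P.total]
  exact tsum_congr fun k => by ring_nf

lemma t_le_one (n : ℕ) (hn : 1 ≤ n) : P.t n ≤ 1 := P.t_one ▸ P.t_mono le_rfl hn

lemma digit_eq {n : ℕ} (hn : 1 ≤ n) {x : ℝ}
    (hx : x ∈ Set.Ioc (P.t (n + 1)) (P.t n)) : P.digit x = n := by
  have hset : {m | 1 ≤ m ∧ x ∈ Set.Ioc (P.t (m + 1)) (P.t m)} = {n} := by
    ext m
    simp only [Set.mem_setOf_eq, Set.mem_singleton_iff]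
    constructor
    · rintro ⟨hm, hx1, hx2⟩
      by_contra hmn
      rcases Nat.lt_or_ge m n with h | h
      · have : P.t n ≤ P.t (m + 1) := P.t_mono (by omega) (by omega)
        linarith [hx.1, hx.2]
      · have : P.t m ≤ P.t (n + 1) := P.t_mono (by omega) (by omega)
        linarith [hx.1, hx.2]
    · rintro rfl; exact ⟨hn, hx⟩
  rw [digit, hset, csInf_singleton]

lemma digit_zero : P.digit 0 = 0 := by
  rw [digit]
  convert Nat.sInf_empty
  ext m
  simp only [Set.mem_setOf_eq, Set.mem_empty_iff_false, iff_false, not_and]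
  intro hm ⟨h1, _⟩
  exact absurd h1 (not_lt.2 (P.t_nonneg (m+1) (by omega)))

lemma mem_Ioc_of_digit {x : ℝ} {n : ℕ} (hn : 1 ≤ n) (hd : P.digit x = n) :
    x ∈ Set.Ioc (P.t (n + 1)) (P.t n) := by
  have hne : {m | 1 ≤ m ∧ x ∈ Set.Ioc (P.t (m + 1)) (P.t m)}.Nonempty := by
    by_contra h
    rw [Set.not_nonempty_iff_eq_empty] at h
    rw [digit, h] at hd
    simp at hd; omega
  have := Nat.sInf_mem hne
  rw [digit] at hd
  rw [hd] at this
  exact this.2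

end LurothData
end Aux
noncomputable section Aux2
namespace LurothData
variable (P : LurothData)

lemma map_eq {x : ℝ} {n : ℕ} (hn : 1 ≤ n) (hd : P.digit x = n) :
    P.map x = (P.t n - x) / P.a n := by
  rw [map, hd, if_neg (by omega)]

lemma dseq_succ (n : ℕ) (x : ℝ) : P.dseq (n + 1) x = P.dseq n (P.map x) := by
  simp [dseq, Function.iterate_succ_apply]

lemma cyl_cons (l : ℕ) (hl : 1 ≤ l) (ls : List ℕ) (hne : ls ≠ [])
    (hpos : ∀ m ∈ ls, 1 ≤ m) :
    P.cyl (l :: ls) = {x | x ∈ Set.Ioc (P.t (l + 1)) (P.t l) ∧ P.map x ∈ P.cyl ls} := by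
  obtain ⟨m0, ls', rfl⟩ : ∃ m0 ls', ls = m0 :: ls' := by
    cases ls with
    | nil => exact absurd rfl hne
    | cons a b => exact ⟨a, b, rfl⟩
  have hm0 : 1 ≤ m0 := hpos m0 (by simp)
  ext x
  simp only [cyl, Set.mem_setOf_eq]
  constructor
  · rintro ⟨hx01, hd⟩
    have hd0 : P.digit x = l := by
      have := hd ⟨0, by simp⟩
      simpa [dseq] using this
    have hxIoc : x ∈ Set.Ioc (P.t (l + 1)) (P.t l) := P.mem_Ioc_of_digit hl hd0
    have hmap : P.map x = (P.t l - x) / P.a l := P.map_eq hl hd0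
    have hal := P.pos l hl
    have hmlt : P.map x < 1 := by
      rw [hmap, div_lt_one hal]
      have := P.t_succ l hl
      linarith [hxIoc.1]
    have hmne : P.map x ≠ 0 := by
      intro h0
      have h1 := hd ⟨1, by simp⟩
      rw [dseq, Function.iterate_one, h0, P.digit_zero] at h1
      simp at h1; omega
    have hmpos : 0 < P.map x := by
      have h0 : (0:ℝ) ≤ P.map x := by
        rw [hmap]
        exact div_nonneg (by linarith [hxIoc.2]) hal.le
      rcases lt_or_eq_of_le h0 with h | h
      · exact h
      · exact absurd h.symm hmne
    refine ⟨hxIoc, ⟨hmpos, hmlt.le⟩, fun i => ?_⟩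
    have := hd ⟨i + 1, by have := i.2; simp at this ⊢; omega⟩
    rw [show ((⟨i+1, _⟩ : Fin _) : ℕ) = (i : ℕ) + 1 from rfl] at this
    rw [P.dseq_succ] at this
    rcases i with ⟨i, hi⟩
    exact this
  · rintro ⟨hxIoc, hmx01, hd⟩
    have hd0 : P.digit x = l := P.digit_eq hl hxIoc
    have hx01 : x ∈ Set.Ioc (0:ℝ) 1 :=
      ⟨lt_of_le_of_lt (P.t_nonneg (l+1) (by omega)) hxIoc.1,
        le_trans hxIoc.2 (P.t_le_one l hl)⟩
    refine ⟨hx01, fun i => ?_⟩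
    rcases i with ⟨i, hi⟩
    cases i with
    | zero => simpa [dseq] using hd0
    | succ j =>
      have hj : j < (m0 :: ls').length := by simpa using hi
      have := hd ⟨j, hj⟩
      rw [show ((⟨j+1, hi⟩ : Fin _) : ℕ) = (j : ℕ) + 1 from rfl, P.dseq_succ]
      simpa using this

end LurothData
end Aux2
noncomputable section Aux3

/-- successor of the last entry -/
def lastSucc : List ℕ → List ℕ
  | [] => []
  | [l] => [l + 1]
  | l :: m :: ls => l :: lastSucc (m :: ls)

lemma lastSucc_eq : ∀ (ls : List ℕ) (h : ls ≠ []),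
    lastSucc ls = ls.dropLast ++ [ls.getLast h + 1]
  | [], h => absurd rfl h
  | [l], _ => rfl
  | l :: m :: ls, _ => by
    rw [lastSucc, lastSucc_eq (m :: ls) (by simp)]
    simp [List.getLast]

namespace LurothData
variable (P : LurothData)

lemma key : ∀ (ls : List ℕ), ls ≠ [] → (∀ l ∈ ls, 1 ≤ l) →
    min (P.val ls) (P.val (lastSucc ls)) < max (P.val ls) (P.val (lastSucc ls)) ∧
    max (P.val ls) (P.val (lastSucc ls)) - min (P.val ls) (P.val (lastSucc ls))
      = (ls.map P.a).prod ∧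
    Set.Ioo (min (P.val ls) (P.val (lastSucc ls))) (max (P.val ls) (P.val (lastSucc ls)))
      ⊆ P.cyl ls ∧
    P.cyl ls ⊆ Set.Icc (min (P.val ls) (P.val (lastSucc ls)))
      (max (P.val ls) (P.val (lastSucc ls)))
  | [], h, _ => absurd rfl h
  | [l], _, hpos => by
    have hl : 1 ≤ l := hpos l (by simp)
    have hlt : P.t (l + 1) < P.t l := P.t_succ_lt l hl
    have hv : P.val [l] = P.t l := by simp [val]
    have hv' : P.val (lastSucc [l]) = P.t (l + 1) := by simp [lastSucc, val]
    have hmin : min (P.val [l]) (P.val (lastSucc [l])) = P.t (l + 1) := by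
      rw [hv, hv', min_eq_right hlt.le]
    have hmax : max (P.val [l]) (P.val (lastSucc [l])) = P.t l := by
      rw [hv, hv', max_eq_left hlt.le]
    rw [hmin, hmax]
    have hcyl : P.cyl [l] = Set.Ioc (P.t (l + 1)) (P.t l) := by
      ext x
      simp only [cyl, Set.mem_setOf_eq]
      constructor
      · rintro ⟨hx01, hd⟩
        have hd0 : P.digit x = l := by simpa [dseq] using hd ⟨0, by simp⟩
        exact P.mem_Ioc_of_digit hl hd0
      · intro hx
        refine ⟨⟨lt_of_le_of_lt (P.t_nonneg (l+1) (by omega)) hx.1,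
            le_trans hx.2 (P.t_le_one l hl)⟩, fun i => ?_⟩
        obtain ⟨i, hi⟩ := i
        have hi' : i = 0 := by simpa using hi
        subst hi'
        show P.dseq 0 x = [l].get ⟨0, hi⟩
        simpa [dseq] using P.digit_eq hl hx
    refine ⟨hlt, ?_, ?_, ?_⟩
    · rw [P.t_succ l hl]; simp
    · rw [hcyl]; exact Set.Ioo_subset_Ioc_self
    · rw [hcyl]; exact Set.Ioc_subset_Icc_self
  | l :: m0 :: ls', _, hpos => by
    have hl : 1 ≤ l := hpos l (by simp)
    have hal := P.pos l hl
    have hpos' : ∀ x ∈ m0 :: ls', 1 ≤ x := fun x hx => hpos x (by simp [hx])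
    obtain ⟨hmM, hprod, hIoo, hIcc⟩ := key (m0 :: ls') (by simp) hpos'
    set e := P.val (m0 :: ls') with he
    set e' := P.val (lastSucc (m0 :: ls')) with he'
    set m := min e e'
    set M := max e e'
    -- bounds 0 ≤ m, M ≤ 1
    have hsub : Set.Icc m M ⊆ Set.Icc (0:ℝ) 1 := by
      have h1 : closure (Set.Ioo m M) ⊆ closure (Set.Ioc (0:ℝ) 1) :=
        closure_mono (hIoo.trans fun x hx => hx.1)
      rwa [closure_Ioo hmM.ne, closure_Ioc (by norm_num : (0:ℝ) ≠ 1)] at h1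
    have hm0' : 0 ≤ m := (hsub ⟨le_rfl, hmM.le⟩).1
    have hM1 : M ≤ 1 := (hsub ⟨hmM.le, le_rfl⟩).2
    -- new values
    have hvnew : P.val (l :: m0 :: ls') = P.t l - P.a l * e := rfl
    have hvnew' : P.val (lastSucc (l :: m0 :: ls')) = P.t l - P.a l * e' := rfl
    set f := P.val (l :: m0 :: ls')
    set f' := P.val (lastSucc (l :: m0 :: ls'))
    have hminf : min f f' = P.t l - P.a l * M := by
      rcases le_total e e' with h | h
      · rw [hvnew, hvnew', min_eq_right (by nlinarith), show M = e' from max_eq_right h]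
      · rw [hvnew, hvnew', min_eq_left (by nlinarith), show M = e from max_eq_left h]
    have hmaxf : max f f' = P.t l - P.a l * m := by
      rcases le_total e e' with h | h
      · rw [hvnew, hvnew', max_eq_left (by nlinarith), show m = e from min_eq_left h]
      · rw [hvnew, hvnew', max_eq_right (by nlinarith), show m = e' from min_eq_right h]
    rw [hminf, hmaxf]
    have hts := P.t_succ l hl
    have hcc := P.cyl_cons l hl (m0 :: ls') (by simp) hpos'
    refine ⟨by nlinarith, ?_, ?_, ?_⟩
    · rw [List.map_cons, List.prod_cons, ← hprod]; ring
    · intro x hx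
      rw [hcc]
      have hxIoc : x ∈ Set.Ioc (P.t (l + 1)) (P.t l) := by
        constructor
        · have : P.t l - P.a l * M ≥ P.t (l + 1) := by nlinarith
          linarith [hx.1]
        · nlinarith [hx.2, hm0']
      have hd0 : P.digit x = l := P.digit_eq hl hxIoc
      have hmap : P.map x = (P.t l - x) / P.a l := P.map_eq hl hd0
      refine ⟨hxIoc, hIoo ?_⟩
      rw [hmap]
      constructor
      · rw [lt_div_iff₀ hal]; nlinarith [hx.2]
      · rw [div_lt_iff₀ hal]; nlinarith [hx.1]
    · intro x hx
      rw [hcc] at hx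
      obtain ⟨hxIoc, hmx⟩ := hx
      have hd0 : P.digit x = l := P.digit_eq hl hxIoc
      have hmap : P.map x = (P.t l - x) / P.a l := P.map_eq hl hd0
      have hmem := hIcc hmx
      rw [hmap] at hmem
      obtain ⟨h1, h2⟩ := hmem
      rw [le_div_iff₀ hal] at h1
      rw [div_le_iff₀ hal] at h2
      exact ⟨by nlinarith, by nlinarith⟩

end LurothData
end Aux3
theorem cylinder_interval_and_measure (P : LurothData) (ls : List ℕ)
    (hne : ls ≠ []) (hpos : ∀ l ∈ ls, 1 ≤ l) :
    closure (P.cyl ls)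
      = Set.uIcc (P.val ls) (P.val (ls.dropLast ++ [ls.getLast hne + 1])) ∧
    volume (P.cyl ls) = ENNReal.ofReal ((ls.map P.a).prod) := by
  obtain ⟨hmM, hprod, hIoo, hIcc⟩ := P.key ls hne hpos
  rw [← lastSucc_eq ls hne]
  set m := min (P.val ls) (P.val (lastSucc ls))
  set M := max (P.val ls) (P.val (lastSucc ls))
  constructor
  · have h1 : closure (P.cyl ls) ⊆ Set.Icc m M := by
      have := closure_mono hIcc
      rwa [closure_Icc] at this
    have h2 : Set.Icc m M ⊆ closure (P.cyl ls) := by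
      have := closure_mono hIoo
      rwa [closure_Ioo hmM.ne] at this
    exact subset_antisymm h1 h2
  · have h1 : volume (P.cyl ls) ≤ ENNReal.ofReal (M - m) := by
      have := measure_mono (μ := volume) hIcc
      rwa [Real.volume_Icc] at this
    have h2 : ENNReal.ofReal (M - m) ≤ volume (P.cyl ls) := by
      have := measure_mono (μ := volume) hIoo
      rwa [Real.volume_Ioo] at this
    rw [← hprod]
    exact le_antisymm h1 h2
end

section
/- Let α be expansive of exponent θ > 0 and eventually decreasing, and fix ε < θ/6. If ℓ ≤ m are natural numbers that are sufficiently large, then a_ℓ · t_m ≤ a_{ℓ+1}, where a_n is the length of the n-th atom and t_n the n-th tail of α. -/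
open Filter Set MeasureTheory Topology

section Aux

variable (P : LurothData)

lemma aux_summable (n : ℕ) (hn : 1 ≤ n) : Summable fun k => P.a (n + k) := by
  have h := (summable_nat_add_iff (f := fun j => P.a (j + 1)) (n - 1)).2 P.summ
  refine (show (fun k => P.a (n + k)) = fun j => P.a (j + (n - 1) + 1) from ?_) ▸ h
  funext k
  congr 1
  omega

lemma aux_t_succ (n : ℕ) (hn : 1 ≤ n) : P.t n = P.a n + P.t (n + 1) := by
  unfold LurothData.t
  rw [Summable.tsum_eq_zero_add (aux_summable P n hn)]
  simp only [Nat.add_zero]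
  congr 1
  exact tsum_congr fun k => by congr 1; omega

lemma aux_t_antitone {n m : ℕ} (hn : 1 ≤ n) (hnm : n ≤ m) : P.t m ≤ P.t n := by
  induction m, hnm using Nat.le_induction with
  | base => exact le_refl _
  | succ m hm ih =>
      have := aux_t_succ P m (le_trans hn hm)
      have hp := P.pos m (le_trans hn hm)
      linarith

lemma aux_sum_Ico {n m : ℕ} (hn : 1 ≤ n) (hnm : n ≤ m) :
    (∑ j ∈ Finset.Ico n m, P.a j) + P.t m = P.t n := by
  induction m, hnm using Nat.le_induction with
  | base => simp
  | succ m hm ih =>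
      rw [Finset.sum_Ico_succ_top hm]
      have h2 := aux_t_succ P m (le_trans hn hm)
      linarith

end Aux
lemma aux_tail_bounds (P : LurothData) (θ : ℝ) (hθ : 0 < θ)
    (hexp : P.Expansive θ) (ε : ℝ) (hε : 0 < ε) :
    ∀ᶠ m : ℕ in Filter.atTop,
      (m : ℝ) ^ (-(θ + ε)) ≤ P.t m ∧ P.t m ≤ (m : ℝ) ^ (-(θ - ε)) := by
  obtain ⟨ψ, hψpos, hSV, ht⟩ := hexp
  set δu : ℝ := (2 : ℝ) ^ (ε / 2) with hδu
  set δd : ℝ := (2 : ℝ) ^ (-(ε / 2)) with hδd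
  have hδu1 : 1 < δu := by
    have h := Real.rpow_lt_rpow_of_exponent_lt one_lt_two (show (0:ℝ) < ε/2 by linarith)
    rwa [Real.rpow_zero] at h
  have hδd1 : δd < 1 := by
    have h := Real.rpow_lt_rpow_of_exponent_lt one_lt_two (show -(ε/2) < (0:ℝ) by linarith)
    rwa [Real.rpow_zero] at h
  have hδdpos : 0 < δd := Real.rpow_pos_of_pos two_pos _
  have hδupos : 0 < δu := Real.rpow_pos_of_pos two_pos _
  have hmem : ∀ᶠ n in Filter.atTop, ψ (2 * n) / ψ n ∈ Set.Ioo δd δu :=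
    (hSV 2 two_pos).eventually (Ioo_mem_nhds hδd1 hδu1)
  obtain ⟨N₁, hN₁⟩ := Filter.eventually_atTop.1 hmem
  set N₀ : ℕ := max N₁ 1 with hN₀def
  have hN₀1 : 1 ≤ N₀ := le_max_right _ _
  have hratio : ∀ n, N₀ ≤ n → ψ (2 * n) ≤ δu * ψ n ∧ δd * ψ n ≤ ψ (2 * n) := by
    intro n hn
    have h := hN₁ n (le_trans (le_max_left _ _) hn)
    have hp := hψpos n
    constructor
    · have h2 := h.2
      rw [div_lt_iff₀ hp] at h2
      nlinarith
    · have h1 := h.1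
      rw [lt_div_iff₀ hp] at h1
      nlinarith
  have hiter : ∀ k : ℕ, ψ (2 ^ k * N₀) ≤ δu ^ k * ψ N₀ ∧ δd ^ k * ψ N₀ ≤ ψ (2 ^ k * N₀) := by
    intro k
    induction k with
    | zero => simp
    | succ k ih =>
        have hge : N₀ ≤ 2 ^ k * N₀ := Nat.le_mul_of_pos_left _ (Nat.pow_pos two_pos)
        have hr := hratio (2 ^ k * N₀) hge
        have he : 2 ^ (k + 1) * N₀ = 2 * (2 ^ k * N₀) := by ring
        rw [he]
        constructor
        · calc ψ (2 * (2 ^ k * N₀)) ≤ δu * ψ (2 ^ k * N₀) := hr.1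
            _ ≤ δu * (δu ^ k * ψ N₀) := by
                exact mul_le_mul_of_nonneg_left ih.1 (le_of_lt hδupos)
            _ = δu ^ (k + 1) * ψ N₀ := by ring
        · calc δd ^ (k + 1) * ψ N₀ = δd * (δd ^ k * ψ N₀) := by ring
            _ ≤ δd * ψ (2 ^ k * N₀) := mul_le_mul_of_nonneg_left ih.2 (le_of_lt hδdpos)
            _ ≤ ψ (2 * (2 ^ k * N₀)) := hr.2
  -- constants
  set C₁ : ℝ := ψ N₀ * (2 : ℝ) ^ θ with hC₁
  set C₂ : ℝ := ψ N₀ * (2 : ℝ) ^ (-(θ + ε / 2)) with hC₂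
  have hC₁pos : 0 < C₁ := mul_pos (hψpos _) (Real.rpow_pos_of_pos two_pos _)
  have hC₂pos : 0 < C₂ := mul_pos (hψpos _) (Real.rpow_pos_of_pos two_pos _)
  have htend : Filter.Tendsto (fun m : ℕ => (m : ℝ) ^ (ε / 2)) Filter.atTop Filter.atTop :=
    (tendsto_rpow_atTop (by linarith)).comp tendsto_natCast_atTop_atTop
  have hev1 : ∀ᶠ m : ℕ in Filter.atTop, C₁ ≤ (m : ℝ) ^ (ε / 2) := htend.eventually_ge_atTop C₁
  have hev2 : ∀ᶠ m : ℕ in Filter.atTop, C₂⁻¹ ≤ (m : ℝ) ^ (ε / 2) := htend.eventually_ge_atTop C₂⁻¹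
  filter_upwards [hev1, hev2, Filter.eventually_ge_atTop N₀, Filter.eventually_ge_atTop 1]
    with m hm1 hm2 hmN₀ hm1'
  have hmR : (1 : ℝ) ≤ (m : ℝ) := by exact_mod_cast hm1'
  have hmRpos : (0 : ℝ) < m := lt_of_lt_of_le one_pos hmR
  set k : ℕ := Nat.log 2 (m / N₀) with hk
  have hN₀pos : 0 < N₀ := hN₀1
  have hdiv : m / N₀ ≠ 0 := by
    have : 1 ≤ m / N₀ := (Nat.one_le_div_iff hN₀pos).2 hmN₀
    omega
  have hk1 : 2 ^ k * N₀ ≤ m := by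
    have h := Nat.pow_log_le_self 2 hdiv
    calc 2 ^ k * N₀ ≤ m / N₀ * N₀ := Nat.mul_le_mul_right _ h
      _ ≤ m := Nat.div_mul_le_self m N₀
  have hk2 : m < 2 ^ (k + 1) * N₀ := by
    have h := Nat.lt_pow_succ_log_self (by norm_num : 1 < 2) (m / N₀)
    exact (Nat.div_lt_iff_lt_mul hN₀pos).1 h
  have hk1R : (2 : ℝ) ^ k * (N₀ : ℝ) ≤ (m : ℝ) := by exact_mod_cast hk1
  have hk2R : (m : ℝ) < 2 * ((2 : ℝ) ^ k * (N₀ : ℝ)) := by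
    have : (m : ℝ) < (2 : ℝ) ^ (k + 1) * (N₀ : ℝ) := by exact_mod_cast hk2
    calc (m : ℝ) < (2 : ℝ) ^ (k + 1) * (N₀ : ℝ) := this
      _ = 2 * ((2 : ℝ) ^ k * (N₀ : ℝ)) := by ring
  have h2kN : (0 : ℝ) < (2 : ℝ) ^ k * (N₀ : ℝ) := by positivity
  have h2kN1 : 1 ≤ 2 ^ k * N₀ := Nat.one_le_iff_ne_zero.2 (by positivity)
  have hcast : ((2 ^ k * N₀ : ℕ) : ℝ) = (2 : ℝ) ^ k * (N₀ : ℝ) := by push_cast; ring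
  have hcast2 : ((2 ^ (k + 1) * N₀ : ℕ) : ℝ) = 2 * ((2 : ℝ) ^ k * (N₀ : ℝ)) := by push_cast; ring
  -- power of δu bound
  have hδuk : δu ^ k ≤ (m : ℝ) ^ (ε / 2) := by
    have h2k : ((2 : ℝ) ^ k) ≤ (m : ℝ) := by
      calc ((2 : ℝ) ^ k) = (2 : ℝ) ^ k * 1 := by ring
        _ ≤ (2 : ℝ) ^ k * (N₀ : ℝ) := by
            apply mul_le_mul_of_nonneg_left _ (by positivity)
            exact_mod_cast hN₀1
        _ ≤ (m : ℝ) := hk1R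
    calc δu ^ k = ((2 : ℝ) ^ (ε / 2)) ^ (k : ℝ) := by
          rw [hδu, Real.rpow_natCast]
      _ = ((2 : ℝ) ^ (k : ℝ)) ^ (ε / 2) := by
          rw [← Real.rpow_mul (by norm_num), ← Real.rpow_mul (by norm_num), mul_comm]
      _ ≤ (m : ℝ) ^ (ε / 2) := by
          apply Real.rpow_le_rpow (by positivity) _ (by linarith)
          rwa [Real.rpow_natCast]
  have hδdk : ((2 : ℝ) * m) ^ (-(ε / 2)) ≤ δd ^ (k + 1) := by
    have h2k : ((2 : ℝ) ^ (k + 1)) ≤ 2 * (m : ℝ) := by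
      have : ((2 : ℝ) ^ k) ≤ (m : ℝ) := by
        calc ((2 : ℝ) ^ k) = (2 : ℝ) ^ k * 1 := by ring
          _ ≤ (2 : ℝ) ^ k * (N₀ : ℝ) := by
              apply mul_le_mul_of_nonneg_left _ (by positivity)
              exact_mod_cast hN₀1
          _ ≤ (m : ℝ) := hk1R
      calc ((2 : ℝ) ^ (k + 1)) = 2 * (2 : ℝ) ^ k := by ring
        _ ≤ 2 * (m : ℝ) := by linarith
    calc ((2 : ℝ) * m) ^ (-(ε / 2)) ≤ ((2 : ℝ) ^ (k + 1) : ℝ) ^ (-(ε / 2)) := by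
          apply Real.rpow_le_rpow_of_nonpos (by positivity) h2k (by linarith)
      _ = ((2 : ℝ) ^ ((k + 1 : ℕ) : ℝ)) ^ (-(ε / 2)) := by rw [Real.rpow_natCast]
      _ = ((2 : ℝ) ^ (-(ε / 2))) ^ ((k + 1 : ℕ) : ℝ) := by
          rw [← Real.rpow_mul (by norm_num), ← Real.rpow_mul (by norm_num), mul_comm]
      _ = δd ^ (k + 1) := by rw [hδd, Real.rpow_natCast]
  constructor
  · -- lower bound : t m ≥ t (2^{k+1} N₀) ≥ δd^{k+1} ψ N₀ (2^{k+1}N₀)^{-θ}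
    have hantmono : P.t (2 ^ (k + 1) * N₀) ≤ P.t m :=
      aux_t_antitone P hm1' (le_of_lt hk2)
    have e1 : P.t (2 ^ (k + 1) * N₀) =
        ψ (2 ^ (k + 1) * N₀) * ((2 ^ (k + 1) * N₀ : ℕ) : ℝ) ^ (-θ) :=
      ht _ (le_trans hN₀1 (Nat.le_mul_of_pos_left _ (Nat.pow_pos two_pos)))
    rw [hcast2] at e1
    set X : ℝ := (2 * ((2 : ℝ) ^ k * (N₀ : ℝ))) ^ (-θ) with hX
    have hXpos : 0 < X := Real.rpow_pos_of_pos (by positivity) _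
    have step1 : δd ^ (k + 1) * ψ N₀ * X ≤ P.t m := by
      calc δd ^ (k + 1) * ψ N₀ * X ≤ ψ (2 ^ (k + 1) * N₀) * X :=
            mul_le_mul_of_nonneg_right (hiter (k + 1)).2 hXpos.le
        _ = P.t (2 ^ (k + 1) * N₀) := e1.symm
        _ ≤ P.t m := hantmono
    have hXge : ((2 : ℝ) * m) ^ (-θ) ≤ X :=
      Real.rpow_le_rpow_of_nonpos (by positivity) (by linarith) (by linarith)
    have step2 : ψ N₀ * ((2 : ℝ) * m) ^ (-(θ + ε / 2)) ≤ δd ^ (k + 1) * ψ N₀ * X := by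
      have hsplit : ((2 : ℝ) * m) ^ (-(θ + ε / 2)) =
          ((2 : ℝ) * m) ^ (-(ε / 2)) * ((2 : ℝ) * m) ^ (-θ) := by
        rw [← Real.rpow_add (by positivity)]; ring_nf
      rw [hsplit]
      have hδdknn : (0:ℝ) ≤ δd ^ (k+1) := by positivity
      calc ψ N₀ * (((2 : ℝ) * m) ^ (-(ε / 2)) * ((2 : ℝ) * m) ^ (-θ))
          ≤ ψ N₀ * (δd ^ (k + 1) * ((2 : ℝ) * m) ^ (-θ)) := by
            apply mul_le_mul_of_nonneg_left _ (hψpos _).le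
            exact mul_le_mul_of_nonneg_right hδdk (by positivity)
        _ ≤ ψ N₀ * (δd ^ (k + 1) * X) := by
            apply mul_le_mul_of_nonneg_left _ (hψpos _).le
            exact mul_le_mul_of_nonneg_left hXge hδdknn
        _ = δd ^ (k + 1) * ψ N₀ * X := by ring
    have hC2ge : (m : ℝ) ^ (-(ε / 2)) ≤ C₂ := by
      have hmpow : (0:ℝ) < (m : ℝ) ^ (ε / 2) := by positivity
      have h1 : 1 ≤ (m : ℝ) ^ (ε / 2) * C₂ := by
        calc (1:ℝ) = C₂⁻¹ * C₂ := (inv_mul_cancel₀ hC₂pos.ne').symm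
          _ ≤ (m : ℝ) ^ (ε / 2) * C₂ := mul_le_mul_of_nonneg_right hm2 hC₂pos.le
      rw [Real.rpow_neg hmRpos.le, inv_eq_one_div, div_le_iff₀ hmpow]
      linarith
    have step3 : (m : ℝ) ^ (-(θ + ε)) ≤ ψ N₀ * ((2 : ℝ) * m) ^ (-(θ + ε / 2)) := by
      have h1 : ((2 : ℝ) * m) ^ (-(θ + ε / 2)) =
          (2 : ℝ) ^ (-(θ + ε / 2)) * (m : ℝ) ^ (-(θ + ε / 2)) :=
        Real.mul_rpow (by norm_num) (by positivity)
      have h2 : (m : ℝ) ^ (-(θ + ε)) =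
          (m : ℝ) ^ (-(ε / 2)) * (m : ℝ) ^ (-(θ + ε / 2)) := by
        rw [← Real.rpow_add hmRpos]; ring_nf
      rw [h1, h2]
      have hmp2 : (0:ℝ) ≤ (m : ℝ) ^ (-(θ + ε / 2)) := by positivity
      calc (m : ℝ) ^ (-(ε / 2)) * (m : ℝ) ^ (-(θ + ε / 2))
          ≤ C₂ * (m : ℝ) ^ (-(θ + ε / 2)) := mul_le_mul_of_nonneg_right hC2ge hmp2
        _ = ψ N₀ * ((2 : ℝ) ^ (-(θ + ε / 2)) * (m : ℝ) ^ (-(θ + ε / 2))) := by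
            rw [hC₂]; ring
    linarith
  · -- upper bound
    have hantmono : P.t m ≤ P.t (2 ^ k * N₀) := aux_t_antitone P h2kN1 hk1
    have e1 : P.t (2 ^ k * N₀) = ψ (2 ^ k * N₀) * ((2 ^ k * N₀ : ℕ) : ℝ) ^ (-θ) :=
      ht _ h2kN1
    rw [hcast] at e1
    set X : ℝ := ((2 : ℝ) ^ k * (N₀ : ℝ)) ^ (-θ) with hX
    have hXpos : 0 < X := Real.rpow_pos_of_pos h2kN _
    have step1 : P.t m ≤ δu ^ k * ψ N₀ * X := by
      calc P.t m ≤ P.t (2 ^ k * N₀) := hantmono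
        _ = ψ (2 ^ k * N₀) * X := e1
        _ ≤ δu ^ k * ψ N₀ * X := mul_le_mul_of_nonneg_right (hiter k).1 hXpos.le
    have hXle : X ≤ ((m : ℝ) / 2) ^ (-θ) := by
      apply Real.rpow_le_rpow_of_nonpos (by positivity) (by linarith) (by linarith)
    have hhalf : ((m : ℝ) / 2) ^ (-θ) = (m : ℝ) ^ (-θ) * (2 : ℝ) ^ θ := by
      rw [Real.div_rpow hmRpos.le (by norm_num : (0:ℝ) ≤ 2), Real.rpow_neg (by norm_num : (0:ℝ) ≤ 2),
        div_eq_mul_inv, inv_inv]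
    have step2 : δu ^ k * ψ N₀ * X ≤ (m : ℝ) ^ (ε / 2) * (ψ N₀ * ((m : ℝ) ^ (-θ) * (2 : ℝ) ^ θ)) := by
      have hδuknn : (0:ℝ) ≤ δu ^ k := by positivity
      calc δu ^ k * ψ N₀ * X ≤ δu ^ k * ψ N₀ * ((m : ℝ) / 2) ^ (-θ) := by
            apply mul_le_mul_of_nonneg_left hXle (mul_nonneg hδuknn (hψpos _).le)
        _ ≤ (m : ℝ) ^ (ε / 2) * ψ N₀ * ((m : ℝ) / 2) ^ (-θ) := by
            apply mul_le_mul_of_nonneg_right _ (by positivity)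
            exact mul_le_mul_of_nonneg_right hδuk (hψpos _).le
        _ = (m : ℝ) ^ (ε / 2) * (ψ N₀ * ((m : ℝ) / 2) ^ (-θ)) := by ring
        _ = (m : ℝ) ^ (ε / 2) * (ψ N₀ * ((m : ℝ) ^ (-θ) * (2 : ℝ) ^ θ)) := by rw [hhalf]
    have step3 : (m : ℝ) ^ (ε / 2) * (ψ N₀ * ((m : ℝ) ^ (-θ) * (2 : ℝ) ^ θ)) ≤ (m : ℝ) ^ (-(θ - ε)) := by
      have h2 : (m : ℝ) ^ (-(θ - ε)) = (m : ℝ) ^ (ε / 2) * ((m : ℝ) ^ (ε / 2) * (m : ℝ) ^ (-θ)) := by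
        rw [← Real.rpow_add hmRpos, ← Real.rpow_add hmRpos]; ring_nf
      rw [h2]
      apply mul_le_mul_of_nonneg_left _ (by positivity)
      calc ψ N₀ * ((m : ℝ) ^ (-θ) * (2 : ℝ) ^ θ) = C₁ * (m : ℝ) ^ (-θ) := by rw [hC₁]; ring
        _ ≤ (m : ℝ) ^ (ε / 2) * (m : ℝ) ^ (-θ) :=
            mul_le_mul_of_nonneg_right hm1 (by positivity)
    linarith
lemma aux_t_pos (P : LurothData) (θ : ℝ) (hexp : P.Expansive θ) {n : ℕ} (hn : 1 ≤ n) :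
    0 < P.t n := by
  obtain ⟨ψ, hψpos, _, ht⟩ := hexp
  rw [ht n hn]
  have : (0:ℝ) < n := by exact_mod_cast hn
  exact mul_pos (hψpos n) (Real.rpow_pos_of_pos this _)

lemma aux_a_anti (P : LurothData) {Nd : ℕ} (hNd : ∀ n, Nd ≤ n → P.a (n + 1) < P.a n) :
    ∀ i j, Nd ≤ i → i ≤ j → P.a j ≤ P.a i := by
  intro i j hi hij
  induction j, hij using Nat.le_induction with
  | base => exact le_refl _
  | succ j hj ih => exact le_trans (hNd j (le_trans hi hj)).le ih

lemma aux_a_upper (P : LurothData) (θ : ℝ) (hθ : 0 < θ)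
    (hexp : P.Expansive θ) (hdec : P.EventuallyDecreasing)
    (ε : ℝ) (hε : 0 < ε) (hεθ : ε < θ) :
    ∀ᶠ m : ℕ in Filter.atTop, P.a m ≤ (m : ℝ) ^ (-(1 + θ - 2 * ε)) := by
  obtain ⟨Nd, hNd⟩ := hdec
  have hanti := aux_a_anti P hNd
  obtain ⟨Nt, hNt⟩ := Filter.eventually_atTop.1 (aux_tail_bounds P θ hθ hexp ε hε)
  set C₃ : ℝ := 2 * (3 : ℝ) ^ (θ - ε) with hC₃
  have htend : Filter.Tendsto (fun m : ℕ => (m : ℝ) ^ ε) Filter.atTop Filter.atTop :=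
    (tendsto_rpow_atTop hε).comp tendsto_natCast_atTop_atTop
  filter_upwards [Filter.eventually_ge_atTop (2 * Nt + 2 * Nd + 4), htend.eventually_ge_atTop C₃]
    with m hm hC
  set q : ℕ := m / 2 with hq
  have hm4 : 4 ≤ m := by omega
  have hmR1 : (1:ℝ) ≤ m := by exact_mod_cast (by omega : 1 ≤ m)
  have hmRpos : (0:ℝ) < m := by linarith
  have hq1 : 1 ≤ q + 1 := by omega
  have hqm : q + 1 ≤ m + 1 := by omega
  have hsum := aux_sum_Ico P hq1 hqm
  have htpos : 0 < P.t (m + 1) := aux_t_pos P θ hexp (by omega)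
  have hcard : (Finset.Ico (q + 1) (m + 1)).card = m - q := by
    rw [Nat.card_Ico]; omega
  have hlb : (m - q) • P.a m ≤ ∑ j ∈ Finset.Ico (q + 1) (m + 1), P.a j := by
    rw [← hcard]
    apply Finset.card_nsmul_le_sum
    intro j hj
    rw [Finset.mem_Ico] at hj
    exact hanti j m (by omega) (by omega)
  rw [nsmul_eq_mul] at hlb
  have h1 : ((m - q : ℕ) : ℝ) * P.a m ≤ P.t (q + 1) := by
    have := hsum
    linarith
  have htq : P.t (q + 1) ≤ ((q + 1 : ℕ) : ℝ) ^ (-(θ - ε)) := (hNt (q + 1) (by omega)).2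
  have hq3 : (m : ℝ) / 3 ≤ ((q + 1 : ℕ) : ℝ) := by
    have h3 : m ≤ 3 * (q + 1) := by omega
    have : (m : ℝ) ≤ 3 * ((q + 1 : ℕ) : ℝ) := by exact_mod_cast h3
    linarith
  have htq2 : ((q + 1 : ℕ) : ℝ) ^ (-(θ - ε)) ≤ ((m : ℝ) / 3) ^ (-(θ - ε)) :=
    Real.rpow_le_rpow_of_nonpos (by positivity) hq3 (by linarith)
  have hmq : (m : ℝ) / 2 ≤ ((m - q : ℕ) : ℝ) := by
    have h2 : m ≤ 2 * (m - q) := by omega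
    have : (m : ℝ) ≤ 2 * ((m - q : ℕ) : ℝ) := by exact_mod_cast h2
    linarith
  have hapos : 0 < P.a m := P.pos m (by omega)
  have h2 : P.a m ≤ ((m : ℝ) / 3) ^ (-(θ - ε)) / ((m : ℝ) / 2) := by
    rw [le_div_iff₀ (by positivity)]
    calc P.a m * ((m : ℝ) / 2) ≤ P.a m * ((m - q : ℕ) : ℝ) :=
          mul_le_mul_of_nonneg_left hmq hapos.le
      _ = ((m - q : ℕ) : ℝ) * P.a m := by ring
      _ ≤ P.t (q + 1) := h1
      _ ≤ ((q + 1 : ℕ) : ℝ) ^ (-(θ - ε)) := htq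
      _ ≤ ((m : ℝ) / 3) ^ (-(θ - ε)) := htq2
  have h3 : ((m : ℝ) / 3) ^ (-(θ - ε)) / ((m : ℝ) / 2) = C₃ * ((m : ℝ) ^ (-(1 + θ - ε))) := by
    rw [Real.div_rpow hmRpos.le (by norm_num : (0:ℝ) ≤ 3),
      Real.rpow_neg (by norm_num : (0:ℝ) ≤ 3)]
    have hsplit : (m : ℝ) ^ (-(1 + θ - ε)) = (m : ℝ) ^ (-(θ - ε)) * (m : ℝ)⁻¹ := by
      rw [← Real.rpow_neg_one (m : ℝ), ← Real.rpow_add hmRpos]; ring_nf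
    rw [hC₃, hsplit]
    field_simp
  have h4 : C₃ * ((m : ℝ) ^ (-(1 + θ - ε))) ≤ (m : ℝ) ^ (-(1 + θ - 2 * ε)) := by
    have hsplit : (m : ℝ) ^ (-(1 + θ - 2 * ε)) = (m : ℝ) ^ ε * (m : ℝ) ^ (-(1 + θ - ε)) := by
      rw [← Real.rpow_add hmRpos]; ring_nf
    rw [hsplit]
    exact mul_le_mul_of_nonneg_right hC (by positivity)
  calc P.a m ≤ ((m : ℝ) / 3) ^ (-(θ - ε)) / ((m : ℝ) / 2) := h2
    _ = C₃ * ((m : ℝ) ^ (-(1 + θ - ε))) := h3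
    _ ≤ (m : ℝ) ^ (-(1 + θ - 2 * ε)) := h4

lemma aux_a_lower (P : LurothData) (θ : ℝ) (hθ : 0 < θ)
    (hexp : P.Expansive θ) (hdec : P.EventuallyDecreasing)
    (ε : ℝ) (hε : 0 < ε) :
    ∀ᶠ m : ℕ in Filter.atTop, (m : ℝ) ^ (-(1 + θ + 2 * ε)) ≤ P.a m := by
  obtain ⟨Nd, hNd⟩ := hdec
  have hanti := aux_a_anti P hNd
  obtain ⟨ψ, hψpos, hSV, ht⟩ := hexp
  have hexp' : P.Expansive θ := ⟨ψ, hψpos, hSV, ht⟩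
  obtain ⟨Nt, hNt⟩ := Filter.eventually_atTop.1 (aux_tail_bounds P θ hθ hexp' ε hε)
  set c : ℝ := ((2 : ℝ) ^ (-θ) + 1) / 2 with hc
  have h2θ : (2 : ℝ) ^ (-θ) < 1 := Real.rpow_lt_one_of_one_lt_of_neg one_lt_two (by linarith)
  have h2θpos : (0 : ℝ) < (2 : ℝ) ^ (-θ) := Real.rpow_pos_of_pos two_pos _
  have hc1 : c < 1 := by rw [hc]; linarith
  have hcpos : 0 < c := by rw [hc]; linarith
  have hprod : (2 : ℝ) ^ θ * (2 : ℝ) ^ (-θ) = 1 := by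
    rw [← Real.rpow_add two_pos]; simp
  have hgt1 : (1 : ℝ) < c * (2 : ℝ) ^ θ := by
    have h2θ1 : (1 : ℝ) < (2 : ℝ) ^ θ := Real.one_lt_rpow_iff_of_pos two_pos |>.2 (Or.inl ⟨one_lt_two, hθ⟩)
    rw [hc]
    have : ((2 : ℝ) ^ (-θ) + 1) / 2 * (2 : ℝ) ^ θ = ((2:ℝ)^θ * (2:ℝ)^(-θ) + (2:ℝ)^θ) / 2 := by ring
    rw [this, hprod]
    linarith
  have hev : ∀ᶠ n : ℕ in Filter.atTop, ψ (2 * n) / ψ n < c * (2 : ℝ) ^ θ :=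
    (hSV 2 two_pos).eventually_lt_const hgt1
  obtain ⟨Nc, hNc⟩ := Filter.eventually_atTop.1 hev
  have htdbl : ∀ n : ℕ, 1 ≤ n → Nc ≤ n → P.t (2 * n) ≤ c * P.t n := by
    intro n h1 h2
    have hnR : (0 : ℝ) < n := by exact_mod_cast h1
    have hcast : ((2 * n : ℕ) : ℝ) = 2 * (n : ℝ) := by push_cast; ring
    rw [ht (2 * n) (by omega), ht n h1, hcast]
    have hmul : ((2 : ℝ) * n) ^ (-θ) = (2 : ℝ) ^ (-θ) * (n : ℝ) ^ (-θ) :=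
      Real.mul_rpow (by norm_num) hnR.le
    rw [hmul]
    have hψ2 : ψ (2 * n) ≤ c * (2 : ℝ) ^ θ * ψ n := by
      have h := hNc n h2
      have hp := hψpos n
      rw [div_lt_iff₀ hp] at h
      linarith
    have hnθpos : (0:ℝ) < (n : ℝ) ^ (-θ) := Real.rpow_pos_of_pos hnR _
    calc ψ (2 * n) * ((2 : ℝ) ^ (-θ) * (n : ℝ) ^ (-θ))
        ≤ c * (2 : ℝ) ^ θ * ψ n * ((2 : ℝ) ^ (-θ) * (n : ℝ) ^ (-θ)) := by
          apply mul_le_mul_of_nonneg_right hψ2 (by positivity)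
      _ = c * ψ n * (n : ℝ) ^ (-θ) * ((2:ℝ)^θ * (2:ℝ)^(-θ)) := by ring
      _ = c * (ψ n * (n : ℝ) ^ (-θ)) := by rw [hprod]; ring
  have htend : Filter.Tendsto (fun m : ℕ => (m : ℝ) ^ ε) Filter.atTop Filter.atTop :=
    (tendsto_rpow_atTop hε).comp tendsto_natCast_atTop_atTop
  filter_upwards [Filter.eventually_ge_atTop (Nt + Nd + Nc + 1),
    htend.eventually_ge_atTop (1 - c)⁻¹] with m hm hC
  have hm1 : 1 ≤ m := by omega
  have hmR1 : (1:ℝ) ≤ m := by exact_mod_cast hm1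
  have hmRpos : (0:ℝ) < m := by linarith
  have hsum := aux_sum_Ico P hm1 (by omega : m ≤ 2 * m)
  have hub : ∑ j ∈ Finset.Ico m (2 * m), P.a j ≤ m • P.a m := by
    have hcard : (Finset.Ico m (2 * m)).card = m := by rw [Nat.card_Ico]; omega
    have h := Finset.sum_le_card_nsmul (Finset.Ico m (2 * m)) (fun j => P.a j) (P.a m)
      (fun j hj => by rw [Finset.mem_Ico] at hj; exact hanti m j (by omega) (by omega))
    rwa [hcard] at h
  rw [nsmul_eq_mul] at hub
  have hdbl := htdbl m hm1 (by omega)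
  have htm_lb : ((m : ℝ)) ^ (-(θ + ε)) ≤ P.t m := (hNt m (by omega)).1
  have h1 : (1 - c) * P.t m ≤ (m : ℝ) * P.a m := by
    have := hsum
    nlinarith
  have h2 : (1 - c) * (m : ℝ) ^ (-(θ + ε)) ≤ (m : ℝ) * P.a m := by
    nlinarith
  have hsplit : (m : ℝ) ^ (-(1 + θ + 2 * ε)) =
      (m : ℝ) ^ (-ε) * ((m : ℝ) ^ (-(θ + ε)) * (m : ℝ)⁻¹) := by
    rw [← Real.rpow_neg_one (m : ℝ), ← Real.rpow_add hmRpos, ← Real.rpow_add hmRpos]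
    ring_nf
  have hme : (m : ℝ) ^ (-ε) ≤ 1 - c := by
    have hmpow : (0:ℝ) < (m : ℝ) ^ ε := by positivity
    have h0 : 1 ≤ (m : ℝ) ^ ε * (1 - c) := by
      calc (1:ℝ) = (1 - c)⁻¹ * (1 - c) := (inv_mul_cancel₀ (by linarith)).symm
        _ ≤ (m : ℝ) ^ ε * (1 - c) := mul_le_mul_of_nonneg_right hC (by linarith)
    rw [Real.rpow_neg hmRpos.le, inv_eq_one_div, div_le_iff₀ hmpow]
    linarith
  rw [hsplit]
  have hstep : (m : ℝ) ^ (-(θ + ε)) * (m : ℝ)⁻¹ ≤ P.a m / (1 - c) := by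
    rw [le_div_iff₀ (by linarith)]
    have hexp1 : (m : ℝ) ^ (-(θ + ε)) * (m : ℝ)⁻¹ * (1 - c) * (m : ℝ) =
        (1 - c) * (m : ℝ) ^ (-(θ + ε)) := by
      field_simp
    have h3 : (m : ℝ) ^ (-(θ + ε)) * (m : ℝ)⁻¹ * (1 - c) * (m : ℝ) ≤ (m:ℝ) * P.a m := by
      rw [hexp1]; exact h2
    have h4 := mul_le_mul_of_nonneg_left h3 (le_of_lt (inv_pos.2 hmRpos))
    calc (m : ℝ) ^ (-(θ + ε)) * (m : ℝ)⁻¹ * (1 - c)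
        = (m:ℝ)⁻¹ * ((m : ℝ) ^ (-(θ + ε)) * (m : ℝ)⁻¹ * (1 - c) * (m : ℝ)) := by
          field_simp
      _ ≤ (m:ℝ)⁻¹ * ((m:ℝ) * P.a m) := h4
      _ = P.a m := by field_simp
  calc (m : ℝ) ^ (-ε) * ((m : ℝ) ^ (-(θ + ε)) * (m : ℝ)⁻¹)
      ≤ (1 - c) * (P.a m / (1 - c)) := by
        apply mul_le_mul hme hstep (by positivity) (by linarith)
    _ = P.a m := by
        rw [mul_comm, div_mul_cancel₀ _ (by linarith : (1:ℝ) - c ≠ 0)]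
theorem atom_tail_product_bound (P : LurothData) (θ : ℝ) (hθ : 0 < θ)
    (hexp : P.Expansive θ) (hdec : P.EventuallyDecreasing)
    (ε : ℝ) (hε : 0 < ε) (hεθ : ε < θ / 6) :
    ∃ K : ℕ, ∀ ℓ m : ℕ, K ≤ ℓ → ℓ ≤ m → P.a ℓ * P.t m ≤ P.a (ℓ + 1) := by
  have hεθ' : ε < θ := by linarith
  obtain ⟨Nt, hNt⟩ := Filter.eventually_atTop.1 (aux_tail_bounds P θ hθ hexp ε hε)
  obtain ⟨N2, hN2⟩ := Filter.eventually_atTop.1 (aux_a_upper P θ hθ hexp hdec ε hε hεθ')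
  obtain ⟨N3, hN3⟩ := Filter.eventually_atTop.1 (aux_a_lower P θ hθ hexp hdec ε hε)
  have hpow5 : (0:ℝ) < θ - 5 * ε := by linarith
  have htend : Filter.Tendsto (fun l : ℕ => (l : ℝ) ^ (θ - 5 * ε)) Filter.atTop Filter.atTop :=
    (tendsto_rpow_atTop hpow5).comp tendsto_natCast_atTop_atTop
  obtain ⟨N4, hN4⟩ :=
    Filter.eventually_atTop.1 (htend.eventually_ge_atTop ((2 : ℝ) ^ (1 + θ + 2 * ε)))
  refine ⟨Nt + N2 + N3 + N4 + 1, ?_⟩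
  intro ℓ m hK hlm
  have hl1 : 1 ≤ ℓ := by omega
  have hlR1 : (1:ℝ) ≤ (ℓ:ℝ) := by exact_mod_cast hl1
  have hlpos : (0:ℝ) < (ℓ:ℝ) := by linarith
  have h1 : P.a ℓ * P.t m ≤ P.a ℓ * P.t ℓ :=
    mul_le_mul_of_nonneg_left (aux_t_antitone P hl1 hlm) (P.pos ℓ hl1).le
  have htl : P.t ℓ ≤ (ℓ:ℝ) ^ (-(θ - ε)) := (hNt ℓ (by omega)).2
  have hal : P.a ℓ ≤ (ℓ:ℝ) ^ (-(1 + θ - 2 * ε)) := hN2 ℓ (by omega)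
  have htlpos : 0 < P.t ℓ := aux_t_pos P θ hexp hl1
  have h2 : P.a ℓ * P.t ℓ ≤ (ℓ:ℝ) ^ (-(1 + θ - 2 * ε)) * (ℓ:ℝ) ^ (-(θ - ε)) :=
    mul_le_mul hal htl htlpos.le (by positivity)
  have h3 : (ℓ:ℝ) ^ (-(1 + θ - 2 * ε)) * (ℓ:ℝ) ^ (-(θ - ε)) = (ℓ:ℝ) ^ (-(1 + 2 * θ - 3 * ε)) := by
    rw [← Real.rpow_add hlpos]; ring_nf
  have h4 : (ℓ:ℝ) ^ (-(1 + 2 * θ - 3 * ε)) ≤ ((ℓ + 1 : ℕ) : ℝ) ^ (-(1 + θ + 2 * ε)) := by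
    have hsplit : (ℓ:ℝ) ^ (-(1 + 2 * θ - 3 * ε)) =
        (ℓ:ℝ) ^ (-(θ - 5 * ε)) * (ℓ:ℝ) ^ (-(1 + θ + 2 * ε)) := by
      rw [← Real.rpow_add hlpos]; ring_nf
    have hc2 : (ℓ:ℝ) ^ (-(θ - 5 * ε)) ≤ (2:ℝ) ^ (-(1 + θ + 2 * ε)) := by
      have h := hN4 ℓ (by omega)
      have hp1 : (0:ℝ) < (ℓ:ℝ) ^ (θ - 5 * ε) := by positivity
      have hp2 : (0:ℝ) < (2:ℝ) ^ (1 + θ + 2 * ε) := by positivity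
      rw [Real.rpow_neg hlpos.le, Real.rpow_neg (by norm_num : (0:ℝ) ≤ 2)]
      exact inv_anti₀ hp2 h
    have hcastl : ((ℓ + 1 : ℕ) : ℝ) = (ℓ:ℝ) + 1 := by push_cast; ring
    have hmono : ((2:ℝ) * ℓ) ^ (-(1 + θ + 2 * ε)) ≤ ((ℓ + 1 : ℕ) : ℝ) ^ (-(1 + θ + 2 * ε)) := by
      apply Real.rpow_le_rpow_of_nonpos
      · rw [hcastl]; linarith
      · rw [hcastl]; linarith
      · linarith
    have hsplit2 : ((2:ℝ) * ℓ) ^ (-(1 + θ + 2 * ε)) =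
        (2:ℝ) ^ (-(1 + θ + 2 * ε)) * (ℓ:ℝ) ^ (-(1 + θ + 2 * ε)) :=
      Real.mul_rpow (by norm_num) hlpos.le
    calc (ℓ:ℝ) ^ (-(1 + 2 * θ - 3 * ε))
        = (ℓ:ℝ) ^ (-(θ - 5 * ε)) * (ℓ:ℝ) ^ (-(1 + θ + 2 * ε)) := hsplit
      _ ≤ (2:ℝ) ^ (-(1 + θ + 2 * ε)) * (ℓ:ℝ) ^ (-(1 + θ + 2 * ε)) :=
          mul_le_mul_of_nonneg_right hc2 (by positivity)
      _ = ((2:ℝ) * ℓ) ^ (-(1 + θ + 2 * ε)) := hsplit2.symm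
      _ ≤ ((ℓ + 1 : ℕ) : ℝ) ^ (-(1 + θ + 2 * ε)) := hmono
  have h5 : ((ℓ + 1 : ℕ) : ℝ) ^ (-(1 + θ + 2 * ε)) ≤ P.a (ℓ + 1) := hN3 (ℓ + 1) (by omega)
  linarith
end
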